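/- Let A ⊂ ℂⁿ be a finite collection of vectors with Σ_{α∈A} (α,u)(α,v) = 0 for all u,v, where (·,·) is a nondegenerate symmetric bilinear form. Then for any functions η^i(x), the matrix G(x) = Σ_i η^i(x) F_i(x) is degenerate for every x, where (F_i)_{jk} = ∂³F/∂x^i∂x^j∂x^k for F(x) = Σ_{α∈A} (α,x)² log(α,x); in fact x lies in the kernel of G(x). -/

import Mathlib

/-- If `∑ α ∈ A, (α,u)(α,v) = 0` for all `u,v`, then for any coefficient
functions `η^i(x)` the matrix `G(x) = ∑ i, η^i(x) F_i(x)` (where `(F_i)_{jk} = F_{ijk}` are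
the third partial derivatives of the prepotential `F(x) = ∑ α, (α,x)² log(α,x)`) satisfies
`G(x)·x = 0`, so `x` lies in its kernel and `G(x)` is degenerate (`det G(x) = 0` when
`x ≠ 0`). -/
theorem linear_combination_of_Fi_degenerate
    (n : ℕ) (A : Finset (Fin n → ℂ))
    (B : LinearMap.BilinForm ℂ (Fin n → ℂ))
    (hBsymm : ∀ u v, B u v = B v u)
    (hBnd : ∀ u, (∀ v, B u v = 0) → u = 0)
    (hzero : ∀ u v, ∑ α ∈ A, B α u * B α v = 0)
    (F : (Fin n → ℂ) → ℂ)
    (hF : ∀ x, F x = ∑ α ∈ A, (B α x) ^ 2 * Complex.log (B α x))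
    (η : (Fin n → ℂ) → Fin n → ℂ)
    (x : Fin n → ℂ) (hx : ∀ α ∈ A, B α x ∈ Complex.slitPlane)
    (Gmat : Matrix (Fin n) (Fin n) ℂ)
    (hGmat : ∀ j k, Gmat j k = ∑ i : Fin n, η x i *
      fderiv ℂ (fun y => fderiv ℂ (fun z => fderiv ℂ F z (Pi.single k 1)) y
        (Pi.single j 1)) x (Pi.single i 1)) :
    Gmat.mulVec x = 0 ∧ (x ≠ 0 → Gmat.det = 0) := by
  classical
  set L : (Fin n → ℂ) → (Fin n → ℂ) →L[ℂ] ℂ :=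
    fun α => LinearMap.toContinuousLinearMap (B α) with hLdef
  have hLapp : ∀ α z, L α z = B α z := fun α z => rfl
  set U : Set (Fin n → ℂ) := {z | ∀ α ∈ A, B α z ∈ Complex.slitPlane} with hUdef
  have hUopen : IsOpen U := by
    have hU : U = ⋂ α ∈ A, (fun z => B α z) ⁻¹' Complex.slitPlane := by
      ext z; simp [hUdef]
    rw [hU]
    exact isOpen_biInter_finset fun α _ =>
      Complex.isOpen_slitPlane.preimage (L α).continuous
  have hxU : x ∈ U := hx
  -- Level 1: derivative of F
  have hD1 : ∀ z ∈ U, HasFDerivAt F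
      (∑ α ∈ A, (2 * B α z * Complex.log (B α z) + B α z) • L α) z := by
    intro z hz
    have hFe : F = fun y => ∑ α ∈ A, (B α y) ^ 2 * Complex.log (B α y) := funext hF
    rw [hFe]
    apply HasFDerivAt.fun_sum
    intro α hα
    have hc : B α z ∈ Complex.slitPlane := hz α hα
    have hc0 : B α z ≠ 0 := Complex.slitPlane_ne_zero hc
    have hL : HasFDerivAt (fun y => B α y) (L α) z := (L α).hasFDerivAt
    have hlog : HasFDerivAt (fun y => Complex.log (B α y)) ((B α z)⁻¹ • L α) z :=
      (Complex.hasDerivAt_log hc).comp_hasFDerivAt z hL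
    simp only [pow_two]
    refine ((hL.mul hL).mul hlog).congr_fderiv ?_
    ext v
    simp only [ContinuousLinearMap.add_apply, ContinuousLinearMap.smul_apply,
      smul_eq_mul, hLapp, Pi.mul_apply]
    field_simp
    ring
  -- Level 2: the first-derivative function and its derivative
  set g : Fin n → (Fin n → ℂ) → ℂ :=
    fun k z => fderiv ℂ F z (Pi.single k 1) with hgdef
  set g' : Fin n → (Fin n → ℂ) → ℂ :=
    fun k z => ∑ α ∈ A, (2 * B α z * Complex.log (B α z) + B α z) * B α (Pi.single k 1)
    with hg'def
  have hgU : ∀ k, ∀ z ∈ U, g k z = g' k z := by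
    intro k z hz
    simp only [hgdef, hg'def, (hD1 z hz).fderiv]
    simp [ContinuousLinearMap.sum_apply, hLapp]
  have hD2 : ∀ k, ∀ z ∈ U, HasFDerivAt (g' k)
      (∑ α ∈ A, ((2 * Complex.log (B α z) + 3) * B α (Pi.single k 1)) • L α) z := by
    intro k z hz
    apply HasFDerivAt.fun_sum
    intro α hα
    have hc : B α z ∈ Complex.slitPlane := hz α hα
    have hc0 : B α z ≠ 0 := Complex.slitPlane_ne_zero hc
    have hL : HasFDerivAt (fun y => B α y) (L α) z := (L α).hasFDerivAt
    have hlog : HasFDerivAt (fun y => Complex.log (B α y)) ((B α z)⁻¹ • L α) z :=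
      (Complex.hasDerivAt_log hc).comp_hasFDerivAt z hL
    have h2 : HasFDerivAt (fun y => 2 * B α y) ((2 : ℂ) • L α) z := hL.const_mul 2
    refine (((h2.mul hlog).add hL).mul_const (B α (Pi.single k 1))).congr_fderiv ?_
    ext v
    simp only [ContinuousLinearMap.add_apply, ContinuousLinearMap.smul_apply,
      smul_eq_mul, hLapp]
    field_simp
    ring
  -- Level 3: the second-derivative function and its derivative
  set h : Fin n → Fin n → (Fin n → ℂ) → ℂ :=
    fun j k y => fderiv ℂ (g k) y (Pi.single j 1) with hhdef
  set h' : Fin n → Fin n → (Fin n → ℂ) → ℂ :=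
    fun j k y => ∑ α ∈ A,
      (2 * Complex.log (B α y) + 3) * B α (Pi.single k 1) * B α (Pi.single j 1)
    with hh'def
  have hhU : ∀ j k, ∀ y ∈ U, h j k y = h' j k y := by
    intro j k y hy
    have heq : g k =ᶠ[nhds y] g' k :=
      Filter.eventuallyEq_of_mem (hUopen.mem_nhds hy) (hgU k)
    simp only [hhdef, hh'def, heq.fderiv_eq, (hD2 k y hy).fderiv]
    simp [ContinuousLinearMap.sum_apply, hLapp]
  have hD3 : ∀ j k, HasFDerivAt (h' j k)
      (∑ α ∈ A, (2 * (B α x)⁻¹ * B α (Pi.single k 1) * B α (Pi.single j 1)) • L α) x := by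
    intro j k
    apply HasFDerivAt.fun_sum
    intro α hα
    have hc : B α x ∈ Complex.slitPlane := hx α hα
    have hL : HasFDerivAt (fun y => B α y) (L α) x := (L α).hasFDerivAt
    have hlog : HasFDerivAt (fun y => Complex.log (B α y)) ((B α x)⁻¹ • L α) x :=
      (Complex.hasDerivAt_log hc).comp_hasFDerivAt x hL
    refine ((((hlog.const_mul 2).add_const 3).mul_const
      (B α (Pi.single k 1))).mul_const (B α (Pi.single j 1))).congr_fderiv ?_
    ext v
    simp only [ContinuousLinearMap.add_apply, ContinuousLinearMap.smul_apply,
      smul_eq_mul, hLapp]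
    ring
  -- Evaluate the third derivative at x
  have hthird : ∀ i j k,
      fderiv ℂ (fun y => fderiv ℂ (fun z => fderiv ℂ F z (Pi.single k 1)) y
        (Pi.single j 1)) x (Pi.single i 1)
      = ∑ α ∈ A, 2 * (B α x)⁻¹ * B α (Pi.single k 1) * B α (Pi.single j 1)
          * B α (Pi.single i 1) := by
    intro i j k
    have heq : h j k =ᶠ[nhds x] h' j k :=
      Filter.eventuallyEq_of_mem (hUopen.mem_nhds hxU) (hhU j k)
    have heq2 : fderiv ℂ (h j k) x = fderiv ℂ (h' j k) x := heq.fderiv_eq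
    show fderiv ℂ (h j k) x (Pi.single i 1) = _
    rw [heq2, (hD3 j k).fderiv]
    simp [ContinuousLinearMap.sum_apply, hLapp]
  -- Decompose B α x as a sum over coordinates
  have hBx : ∀ α : Fin n → ℂ, (∑ k, B α (Pi.single k 1) * x k) = B α x := by
    intro α
    have hxsum : (∑ k, x k • (Pi.single k 1 : Fin n → ℂ)) = x := by
      ext j
      simp [Pi.single_apply, Finset.sum_ite_eq']
    conv_rhs => rw [← hxsum]
    rw [map_sum]
    refine Finset.sum_congr rfl fun k _ => ?_
    rw [map_smul]
    simp [mul_comm]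
  -- Main computation: Gmat.mulVec x = 0
  have hmul : Gmat.mulVec x = 0 := by
    funext j
    have hrow : ∀ k, Gmat j k = ∑ i : Fin n, ∑ α ∈ A, η x i *
        (2 * (B α x)⁻¹ * B α (Pi.single k 1) * B α (Pi.single j 1)
          * B α (Pi.single i 1)) := by
      intro k
      rw [hGmat j k]
      refine Finset.sum_congr rfl fun i _ => ?_
      rw [hthird i j k, Finset.mul_sum]
    show (∑ k, Gmat j k * x k) = 0
    calc (∑ k, Gmat j k * x k)
        = ∑ k : Fin n, ∑ i : Fin n, ∑ α ∈ A, η x i *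
            (2 * (B α x)⁻¹ * B α (Pi.single k 1) * B α (Pi.single j 1)
              * B α (Pi.single i 1)) * x k := by
          refine Finset.sum_congr rfl fun k _ => ?_
          rw [hrow k, Finset.sum_mul]
          exact Finset.sum_congr rfl fun i _ => by rw [Finset.sum_mul]
      _ = ∑ i : Fin n, ∑ k : Fin n, ∑ α ∈ A, η x i *
            (2 * (B α x)⁻¹ * B α (Pi.single k 1) * B α (Pi.single j 1)
              * B α (Pi.single i 1)) * x k := Finset.sum_comm
      _ = 0 := by
          refine Finset.sum_eq_zero fun i _ => ?_
          rw [Finset.sum_comm]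
          calc (∑ α ∈ A, ∑ k : Fin n, η x i *
                (2 * (B α x)⁻¹ * B α (Pi.single k 1) * B α (Pi.single j 1)
                  * B α (Pi.single i 1)) * x k)
              = ∑ α ∈ A, η x i * 2 * (B α (Pi.single i 1) * B α (Pi.single j 1)) := by
                refine Finset.sum_congr rfl fun α hα => ?_
                have hc0 : B α x ≠ 0 := Complex.slitPlane_ne_zero (hx α hα)
                have : (∑ k : Fin n, η x i *
                    (2 * (B α x)⁻¹ * B α (Pi.single k 1) * B α (Pi.single j 1)
                      * B α (Pi.single i 1)) * x k)
                    = η x i * (2 * (B α x)⁻¹ * B α (Pi.single j 1)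
                      * B α (Pi.single i 1)) * (∑ k, B α (Pi.single k 1) * x k) := by
                  rw [Finset.mul_sum]
                  exact Finset.sum_congr rfl fun k _ => by ring
                rw [this, hBx α]
                field_simp
            _ = 0 := by
                rw [← Finset.mul_sum, hzero (Pi.single i 1) (Pi.single j 1), mul_zero]
  refine ⟨hmul, fun hx0 => ?_⟩
  exact Matrix.exists_mulVec_eq_zero_iff.mp ⟨x, hx0, hmul⟩
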